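/- Let r > 0 and let f be holomorphic on the punctured disk {ζ ∈ ℂ : 0 < |ζ| < r} such that there exist n ∈ ℕ and C > 0 with |f(ζ)| ≤ C/|ζ|^n for all ζ in the punctured disk. If for every q ∈ ℕ there exist c_q > 0 and η_q > 0 such that |f(ξ)| ≤ c_q · ξ^q for all real ξ with 0 < ξ < η_q, then f is identically zero on the punctured disk. -/

import Mathlib

open Complex Set Filter Topology

theorem stmt0 (r : ℝ) (hr : 0 < r) (f : ℂ → ℂ)
    (hf : DifferentiableOn ℂ f {ζ : ℂ | 0 < ‖ζ‖ ∧ ‖ζ‖ < r})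
    (n : ℕ) (C : ℝ) (hC : 0 < C)
    (hbound : ∀ ζ : ℂ, 0 < ‖ζ‖ → ‖ζ‖ < r →
      ‖f ζ‖ ≤ C / (‖ζ‖) ^ n)
    (hdecay : ∀ q : ℕ, ∃ c > 0, ∃ η > 0, ∀ ξ : ℝ, 0 < ξ → ξ < η →
      ‖f ξ‖ ≤ c * ξ ^ q) :
    ∀ ζ : ℂ, 0 < ‖ζ‖ → ‖ζ‖ < r → f ζ = 0 := by
  set s : Set ℂ := Metric.ball 0 r with hs
  have hset : {ζ : ℂ | 0 < ‖ζ‖ ∧ ‖ζ‖ < r} = s \ {0} := by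
    ext z
    simp [hs, Metric.mem_ball, Complex.dist_eq, AbsoluteValue.pos_iff, and_comm]
  rw [hset] at hf
  set g : ℂ → ℂ := fun ζ => ζ ^ (n + 1) * f ζ with hgdef
  have hg : DifferentiableOn ℂ g (s \ {0}) :=
    (differentiableOn_id.pow _).mul hf
  have habs : ∀ z : ℂ, z ∈ s \ {0} → ‖g z‖ ≤ C * ‖z‖ := by
    rintro z ⟨hz1, hz2⟩
    have hz0 : 0 < ‖z‖ := by
      simpa [AbsoluteValue.pos_iff] using hz2
    have hzr : ‖z‖ < r := by
      have := hz1; simp only [hs, Metric.mem_ball, Complex.dist_eq, sub_zero] at this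
      exact this
    have hb := hbound z hz0 hzr
    have : ‖g z‖ = ‖z‖ ^ (n + 1) * ‖f z‖ := by
      simp [hgdef, map_mul, map_pow]
    rw [this]
    calc ‖z‖ ^ (n + 1) * ‖f z‖
        ≤ ‖z‖ ^ (n + 1) * (C / ‖z‖ ^ n) := by
          exact mul_le_mul_of_nonneg_left hb (by positivity)
      _ = C * ‖z‖ := by
          field_simp [pow_succ]; ring
  have hev : ∀ᶠ z in 𝓝[≠] (0 : ℂ), ‖g z‖ ≤ C * ‖z‖ := by
    filter_upwards [self_mem_nhdsWithin,
      mem_nhdsWithin_of_mem_nhds (Metric.ball_mem_nhds (0 : ℂ) hr)] with z hz1 hz2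
    exact habs z ⟨hz2, hz1⟩
  have htend : Tendsto g (𝓝[≠] (0 : ℂ)) (𝓝 0) := by
    apply squeeze_zero_norm' hev
    have : Tendsto (fun z : ℂ => C * ‖z‖) (𝓝 0) (𝓝 (C * ‖(0:ℂ)‖)) :=
      (continuous_const.mul continuous_norm).tendsto 0
    simpa using this.mono_left nhdsWithin_le_nhds
  have hlim : limUnder (𝓝[≠] (0 : ℂ)) g = 0 := htend.limUnder_eq
  have hbdd : BddAbove (norm ∘ g '' (s \ {0})) := by
    refine ⟨C * r, ?_⟩
    rintro _ ⟨z, hz, rfl⟩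
    have hzr : ‖z‖ < r := by
      have := hz.1; simp only [hs, Metric.mem_ball, Complex.dist_eq, sub_zero] at this
      exact this
    calc ‖g z‖ ≤ C * ‖z‖ := habs z hz
      _ ≤ C * r := by nlinarith [norm_nonneg z]
  set G : ℂ → ℂ := Function.update g 0 (limUnder (𝓝[≠] (0 : ℂ)) g) with hGdef
  have hG : DifferentiableOn ℂ G s :=
    Complex.differentiableOn_update_limUnder_of_bddAbove
      (Metric.ball_mem_nhds (0 : ℂ) hr) hg hbdd
  have hGan : AnalyticOnNhd ℂ G s := hG.analyticOnNhd Metric.isOpen_ball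
  have hGeq : ∀ z : ℂ, z ≠ 0 → G z = g z := fun z hz => Function.update_of_ne hz _ _
  have hA0 : AnalyticAt ℂ G 0 := hGan 0 (Metric.mem_ball_self hr)
  -- key step: G vanishes in a neighborhood of 0
  have hev0 : ∀ᶠ z in 𝓝 (0 : ℂ), G z = 0 := by
    rcases eq_or_ne (analyticOrderAt G 0) ⊤ with htop | hne
    · exact analyticOrderAt_eq_top.mp htop
    · exfalso
      obtain ⟨m, hm⟩ := WithTop.ne_top_iff_exists.mp hne
      obtain ⟨h, hhan, hh0, hevh⟩ := (hA0.analyticOrderAt_eq_natCast (n := m)).mp hm.symm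
      obtain ⟨c, hc, η, hη, hdec⟩ := hdecay m
      -- bound |h ξ| for small real positive ξ
      have hcont : Tendsto (fun ξ : ℝ => ‖h ξ‖)
          (𝓝[>] (0 : ℝ)) (𝓝 (‖h 0‖)) := by
        have h2 : ContinuousAt h ((0:ℝ):ℂ) := by simpa using hhan.continuousAt
        have h3 : ContinuousAt (fun ξ : ℝ => ‖h ξ‖) 0 :=
          continuous_norm.continuousAt.comp
            (h2.comp Complex.continuous_ofReal.continuousAt)
        simpa using h3.continuousWithinAt.tendsto
      have hevsmall : ∀ᶠ ξ : ℝ in 𝓝[>] (0 : ℝ),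
          ‖h ξ‖ ≤ c * ξ ^ (n + 1) := by
        have h1 : ∀ᶠ ξ : ℝ in 𝓝 (0 : ℝ), G ξ = (ξ : ℂ) ^ m • h ξ := by
          have : Tendsto (fun ξ : ℝ => (ξ : ℂ)) (𝓝 0) (𝓝 0) := by
            simpa using Complex.continuous_ofReal.tendsto 0
          exact this.eventually (by simpa using hevh)
        filter_upwards [self_mem_nhdsWithin, mem_nhdsWithin_of_mem_nhds h1,
          mem_nhdsWithin_of_mem_nhds (Ioo_mem_nhds (neg_lt_zero.mpr (lt_min hη hr))
            (lt_min hη hr))] with ξ hpos h1' hmem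
        have hξ0 : (0:ℝ) < ξ := hpos
        have hξη : ξ < η := lt_of_lt_of_le hmem.2 (min_le_left _ _)
        have hξr : ξ < r := lt_of_lt_of_le hmem.2 (min_le_right _ _)
        have hne0 : (ξ : ℂ) ≠ 0 := by
          simp [Complex.ofReal_eq_zero]; linarith
        have hGg : G ξ = g ξ := hGeq _ hne0
        have habsξ : ‖(ξ : ℂ)‖ = ξ := by
          rw [Complex.norm_real, Real.norm_eq_abs, abs_of_pos hξ0]
        -- |G ξ| = ξ^m * |h ξ|
        have e1 : ξ ^ m * ‖h ξ‖ = ‖G ξ‖ := by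
          rw [h1']
          simp [smul_eq_mul, norm_mul, norm_pow, habsξ, abs_of_pos hξ0]
        -- |G ξ| ≤ c * ξ^(m+n+1)
        have e2 : ‖G ξ‖ ≤ c * ξ ^ (m + n + 1) := by
          rw [hGg, hgdef]
          simp only [norm_mul, norm_pow, habsξ]
          calc ξ ^ (n + 1) * ‖f ξ‖ ≤ ξ ^ (n + 1) * (c * ξ ^ m) :=
                mul_le_mul_of_nonneg_left (hdec ξ hξ0 hξη) (by positivity)
            _ = c * ξ ^ (m + n + 1) := by ring
        have hpm : (0:ℝ) < ξ ^ m := by positivity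
        have : ξ ^ m * ‖h ξ‖ ≤ c * ξ ^ (m + n + 1) := e1 ▸ e2
        have : ‖h ξ‖ ≤ c * ξ ^ (m + n + 1) / ξ ^ m := by
          rw [le_div_iff₀ hpm]; linarith [this]
        calc ‖h ξ‖ ≤ c * ξ ^ (m + n + 1) / ξ ^ m := this
          _ = c * ξ ^ (n + 1) := by
            have hξne : ξ ≠ 0 := ne_of_gt hξ0
            field_simp
            ring
      have hz : Tendsto (fun ξ : ℝ => c * ξ ^ (n + 1)) (𝓝[>] (0 : ℝ)) (𝓝 0) := by
        have : Tendsto (fun ξ : ℝ => c * ξ ^ (n + 1)) (𝓝 0) (𝓝 (c * 0 ^ (n + 1))) :=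
          (continuous_const.mul (continuous_pow _)).tendsto 0
        simpa using this.mono_left nhdsWithin_le_nhds
      have hle : ‖h 0‖ ≤ 0 :=
        le_of_tendsto_of_tendsto hcont hz hevsmall
      have : ‖h 0‖ = 0 := le_antisymm hle (norm_nonneg _)
      exact hh0 (norm_eq_zero.mp this)
  -- conclude by the identity theorem
  have hzero : EqOn G 0 s :=
    hGan.eqOn_zero_of_preconnected_of_eventuallyEq_zero
      (convex_ball (0:ℂ) r).isPreconnected (Metric.mem_ball_self hr) hev0
  intro ζ h1 h2
  have hmem : ζ ∈ s \ {0} := by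
    rw [← hset]; exact ⟨h1, h2⟩
  have hζ0 : ζ ≠ 0 := by
    intro h; rw [h] at h1; simp at h1
  have : g ζ = 0 := by
    have := hzero hmem.1
    rwa [hGeq ζ hζ0] at this
  have hpow : ζ ^ (n + 1) ≠ 0 := pow_ne_zero _ hζ0
  exact (mul_eq_zero.mp this).resolve_left hpow
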